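/- Let Σ and Ψ be bounded sets of n×n complex matrices. Then the joint spectral radius satisfies r̂(ΣΨ) = r̂(ΨΣ), where ΣΨ = {AB : A ∈ Σ, B ∈ Ψ} and r̂(Φ) = lim_{m→∞} (sup_{A ∈ Φ^m} ‖A‖)^{1/m}. -/

import Mathlib

/-- The ℓ² → ℓ² operator norm of a complex `n × n` matrix. -/
noncomputable def cOpNorm {n : ℕ} (A : Matrix (Fin n) (Fin n) ℂ) : ℝ :=
  ‖LinearMap.toContinuousLinearMap (Matrix.toEuclideanLin A)‖

/-- `Φ^m`: the set of all products of `m` elements of `Φ`. -/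
def prodSet {n : ℕ} (S : Set (Matrix (Fin n) (Fin n) ℂ)) (m : ℕ) :
    Set (Matrix (Fin n) (Fin n) ℂ) :=
  {A | ∃ l : List (Matrix (Fin n) (Fin n) ℂ), l.length = m ∧ (∀ B ∈ l, B ∈ S) ∧ l.prod = A}

/-- The joint spectral radius `r̂(Φ) = inf_{m ≥ 1} (sup_{A ∈ Φ^m} ‖A‖)^{1/m}` (the limit in
the definition equals this infimum). -/
noncomputable def jointRad {n : ℕ} (S : Set (Matrix (Fin n) (Fin n) ℂ)) : ℝ :=
  ⨅ m : ℕ, (sSup (cOpNorm '' prodSet S (m + 1))) ^ (((m : ℝ) + 1)⁻¹)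

open Filter Real

section Aux

lemma cOpNorm_eq {n : ℕ} (A : Matrix (Fin n) (Fin n) ℂ) :
    cOpNorm A = ‖Matrix.toEuclideanCLM (𝕜 := ℂ) A‖ := by
  have h : LinearMap.toContinuousLinearMap (Matrix.toEuclideanLin A)
      = Matrix.toEuclideanCLM (𝕜 := ℂ) A := by
    apply ContinuousLinearMap.coe_injective
    rw [LinearMap.coe_toContinuousLinearMap, Matrix.coe_toEuclideanCLM_eq_toEuclideanLin]
  rw [cOpNorm, h]

lemma cOpNorm_nonneg {n : ℕ} (A : Matrix (Fin n) (Fin n) ℂ) : 0 ≤ cOpNorm A :=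
  norm_nonneg _

lemma cOpNorm_mul_le {n : ℕ} (A B : Matrix (Fin n) (Fin n) ℂ) :
    cOpNorm (A * B) ≤ cOpNorm A * cOpNorm B := by
  simp only [cOpNorm_eq, map_mul]
  exact norm_mul_le _ _

lemma cOpNorm_one_le {n : ℕ} : cOpNorm (1 : Matrix (Fin n) (Fin n) ℂ) ≤ 1 := by
  simp only [cOpNorm_eq, map_one]
  rw [ContinuousLinearMap.one_def]
  exact ContinuousLinearMap.norm_id_le

variable {n : ℕ} {S : Set (Matrix (Fin n) (Fin n) ℂ)}

/-- `NS S m = sup_{A ∈ S^m} ‖A‖`. -/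
noncomputable def NS (S : Set (Matrix (Fin n) (Fin n) ℂ)) (m : ℕ) : ℝ :=
  sSup (cOpNorm '' prodSet S m)

lemma list_prod_norm_le {C : ℝ} (hC : ∀ A ∈ S, cOpNorm A ≤ C) (hC0 : 0 ≤ C)
    (l : List (Matrix (Fin n) (Fin n) ℂ)) (hl : ∀ B ∈ l, B ∈ S) :
    cOpNorm l.prod ≤ C ^ l.length := by
  induction l with
  | nil => simpa using cOpNorm_one_le
  | cons x xs ih =>
    simp only [List.prod_cons, List.length_cons, pow_succ']
    calc cOpNorm (x * xs.prod) ≤ cOpNorm x * cOpNorm xs.prod := cOpNorm_mul_le _ _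
      _ ≤ C * C ^ xs.length := by
          apply mul_le_mul (hC x (hl x (List.mem_cons_self)))
            (ih fun B hB => hl B (by simp [hB])) (cOpNorm_nonneg _) hC0

lemma prodSet_norm_le {C : ℝ} (hC : ∀ A ∈ S, cOpNorm A ≤ C) (hC0 : 0 ≤ C) {m : ℕ}
    {X : Matrix (Fin n) (Fin n) ℂ} (hX : X ∈ prodSet S m) : cOpNorm X ≤ C ^ m := by
  obtain ⟨l, hlen, hmem, hprod⟩ := hX
  rw [← hprod, ← hlen]
  exact list_prod_norm_le hC hC0 l hmem

lemma bddAbove_img {C : ℝ} (hC : ∀ A ∈ S, cOpNorm A ≤ C) (hC0 : 0 ≤ C) (m : ℕ) :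
    BddAbove (cOpNorm '' prodSet S m) := by
  refine ⟨C ^ m, ?_⟩
  rintro x ⟨X, hX, rfl⟩
  exact prodSet_norm_le hC hC0 hX

lemma NS_nonneg (m : ℕ) : 0 ≤ NS S m :=
  Real.sSup_nonneg (by rintro x ⟨X, _, rfl⟩; exact cOpNorm_nonneg X)

lemma le_NS {C : ℝ} (hC : ∀ A ∈ S, cOpNorm A ≤ C) (hC0 : 0 ≤ C) {m : ℕ}
    {X : Matrix (Fin n) (Fin n) ℂ} (hX : X ∈ prodSet S m) : cOpNorm X ≤ NS S m :=
  le_csSup (bddAbove_img hC hC0 m) ⟨X, hX, rfl⟩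

lemma prodSet_split {a b : ℕ} {X : Matrix (Fin n) (Fin n) ℂ} (hX : X ∈ prodSet S (a + b)) :
    ∃ P ∈ prodSet S a, ∃ Q ∈ prodSet S b, X = P * Q := by
  obtain ⟨l, hlen, hmem, hprod⟩ := hX
  refine ⟨(l.take a).prod, ⟨l.take a, ?_, fun B hB => hmem B (List.mem_of_mem_take hB), rfl⟩,
    (l.drop a).prod, ⟨l.drop a, ?_, fun B hB => hmem B (List.mem_of_mem_drop hB), rfl⟩, ?_⟩
  · simp [hlen]
  · simp [hlen]
  · rw [← hprod, List.prod_take_mul_prod_drop]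

lemma NS_add_le {C : ℝ} (hC : ∀ A ∈ S, cOpNorm A ≤ C) (hC0 : 0 ≤ C) (a b : ℕ) :
    NS S (a + b) ≤ NS S a * NS S b := by
  rcases Set.eq_empty_or_nonempty (prodSet S (a + b)) with h | h
  · rw [NS, h]
    simpa using mul_nonneg (NS_nonneg a) (NS_nonneg b)
  · apply csSup_le (h.image _)
    rintro x ⟨X, hX, rfl⟩
    obtain ⟨P, hP, Q, hQ, rfl⟩ := prodSet_split hX
    calc cOpNorm (P * Q) ≤ cOpNorm P * cOpNorm Q := cOpNorm_mul_le _ _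
      _ ≤ NS S a * NS S b :=
        mul_le_mul (le_NS hC hC0 hP) (le_NS hC hC0 hQ) (cOpNorm_nonneg _) (NS_nonneg a)

lemma NS_pow_le {C : ℝ} (hC : ∀ A ∈ S, cOpNorm A ≤ C) (hC0 : 0 ≤ C) (q k : ℕ) :
    NS S (q * (k + 1)) ≤ NS S q ^ (k + 1) := by
  induction k with
  | zero => simp
  | succ k ih =>
    calc NS S (q * (k + 2)) = NS S (q * (k + 1) + q) := by ring_nf
      _ ≤ NS S (q * (k + 1)) * NS S q := NS_add_le hC hC0 _ _
      _ ≤ NS S q ^ (k + 1) * NS S q :=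
        mul_le_mul_of_nonneg_right ih (NS_nonneg q)
      _ = NS S q ^ (k + 2) := by ring

lemma prodSet_cons {k : ℕ} {x P : Matrix (Fin n) (Fin n) ℂ} (hx : x ∈ S)
    (hP : P ∈ prodSet S k) : x * P ∈ prodSet S (k + 1) := by
  obtain ⟨l, hlen, hmem, hprod⟩ := hP
  refine ⟨x :: l, by simp [hlen], ?_, by simp [hprod]⟩
  rintro B hB
  rcases List.mem_cons.1 hB with rfl | h
  exacts [hx, hmem B h]

lemma decomp (Sig Psi : Set (Matrix (Fin n) (Fin n) ℂ))
    {l : List (Matrix (Fin n) (Fin n) ℂ)} (hne : l ≠ [])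
    (hl : ∀ x ∈ l, x ∈ Set.image2 (· * ·) Sig Psi) :
    ∃ A ∈ Sig, ∃ B ∈ Psi, ∃ P ∈ prodSet (Set.image2 (· * ·) Psi Sig) (l.length - 1),
      l.prod = A * P * B := by
  induction l with
  | nil => exact absurd rfl hne
  | cons x xs ih =>
    obtain ⟨A, hA, B, hB, rfl⟩ := hl x (List.mem_cons_self)
    rcases eq_or_ne xs [] with rfl | hxs
    · exact ⟨A, hA, B, hB, 1, ⟨[], rfl, by simp, rfl⟩, by simp⟩
    · obtain ⟨A', hA', B', hB', P, hP, hprod⟩ := ih hxs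
        (fun y hy => hl y (List.mem_cons_of_mem _ hy))
      refine ⟨A, hA, B', hB', (B * A') * P, ?_, ?_⟩
      · have h1 : (B * A') * P ∈ prodSet (Set.image2 (· * ·) Psi Sig) (xs.length - 1 + 1) :=
          prodSet_cons (Set.mem_image2_of_mem hB hA') hP
        have h2 : xs.length - 1 + 1 = xs.length :=
          Nat.succ_pred_eq_of_pos (List.length_pos_iff.2 hxs)
        rw [h2] at h1
        simpa using h1
      · rw [List.prod_cons, hprod]
        simp only [mul_assoc]

lemma NS_key {D1 D2 : ℝ} {Sig Psi : Set (Matrix (Fin n) (Fin n) ℂ)}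
    (hS : ∀ A ∈ Sig, cOpNorm A ≤ D1) (h1 : 0 ≤ D1)
    (hP : ∀ A ∈ Psi, cOpNorm A ≤ D2) (h2 : 0 ≤ D2) (k : ℕ) :
    NS (Set.image2 (· * ·) Sig Psi) (k + 1)
      ≤ D1 * NS (Set.image2 (· * ·) Psi Sig) k * D2 := by
  have hbound : ∀ X ∈ Set.image2 (· * ·) Psi Sig, cOpNorm X ≤ D2 * D1 := by
    rintro _ ⟨B, hB, A, hA, rfl⟩
    calc cOpNorm (B * A) ≤ cOpNorm B * cOpNorm A := cOpNorm_mul_le _ _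
      _ ≤ D2 * D1 := mul_le_mul (hP B hB) (hS A hA) (cOpNorm_nonneg _) h2
  rcases Set.eq_empty_or_nonempty (prodSet (Set.image2 (· * ·) Sig Psi) (k + 1)) with h | h
  · rw [NS, h]
    simpa using mul_nonneg (mul_nonneg h1 (NS_nonneg _)) h2
  · apply csSup_le (h.image _)
    rintro x ⟨X, hX, rfl⟩
    obtain ⟨l, hlen, hmem, hprod⟩ := hX
    have hne : l ≠ [] := by rintro rfl; simp at hlen
    obtain ⟨A, hA, B, hB, P, hPm, hpr⟩ := decomp Sig Psi hne hmem
    have hlen' : l.length - 1 = k := by omega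
    rw [hlen'] at hPm
    rw [← hprod, hpr]
    calc cOpNorm (A * P * B) ≤ cOpNorm (A * P) * cOpNorm B := cOpNorm_mul_le _ _
      _ ≤ (cOpNorm A * cOpNorm P) * cOpNorm B :=
          mul_le_mul_of_nonneg_right (cOpNorm_mul_le _ _) (cOpNorm_nonneg _)
      _ ≤ (D1 * NS (Set.image2 (· * ·) Psi Sig) k) * D2 := by
          apply mul_le_mul _ (hP B hB) (cOpNorm_nonneg _)
            (mul_nonneg h1 (NS_nonneg _))
          exact mul_le_mul (hS A hA) (le_NS hbound (mul_nonneg h2 h1) hPm)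
            (cOpNorm_nonneg _) h1

lemma aux_real_tendsto (C t q : ℝ) (hq : 0 < q) :
    Tendsto (fun x : ℝ => (C + x * t) * (q * x + 1)⁻¹) atTop (nhds (t * q⁻¹)) := by
  have h1 : Tendsto (fun x : ℝ => C * x⁻¹ + t) atTop (nhds t) := by
    have := (tendsto_inv_atTop_zero (𝕜 := ℝ)).const_mul C
    simpa using this.add_const t
  have h2 : Tendsto (fun x : ℝ => (q + x⁻¹)⁻¹) atTop (nhds q⁻¹) := by
    have := (tendsto_const_nhds (x := q) (f := atTop)).add tendsto_inv_atTop_zero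
    simpa using this.inv₀ (by positivity)
  have h3 := h1.mul h2
  apply h3.congr'
  filter_upwards [eventually_ge_atTop (1 : ℝ)] with x hx
  have hx0 : (0 : ℝ) < x := by linarith
  field_simp

lemma aux_tendsto (C t q : ℝ) (hC : 0 < C) (ht : 0 < t) (hq : 0 < q) :
    Tendsto (fun k : ℕ => (C * t ^ (k + 1)) ^ ((q * ((k : ℝ) + 1) + 1)⁻¹)) atTop
      (nhds (t ^ q⁻¹)) := by
  have key : ∀ k : ℕ, (C * t ^ (k + 1)) ^ ((q * ((k : ℝ) + 1) + 1)⁻¹)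
      = Real.exp ((Real.log C + ((k : ℝ) + 1) * Real.log t) * (q * ((k : ℝ) + 1) + 1)⁻¹) := by
    intro k
    rw [Real.rpow_def_of_pos (by positivity), Real.log_mul (ne_of_gt hC) (by positivity),
      Real.log_pow]
    push_cast
    ring_nf
  have hcast : Tendsto (fun k : ℕ => ((k : ℝ) + 1)) atTop atTop :=
    tendsto_atTop_add_const_right _ 1 tendsto_natCast_atTop_atTop
  have total := (aux_real_tendsto (Real.log C) (Real.log t) q hq).comp hcast
  have final := (Real.continuous_exp.tendsto _).comp total
  rw [show Real.exp (Real.log t * q⁻¹) = t ^ q⁻¹ by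
    rw [Real.rpow_def_of_pos ht]] at final
  exact Tendsto.congr (fun k => (key k).symm) final

lemma jointRad_le_aux (Sig Psi : Set (Matrix (Fin n) (Fin n) ℂ))
    (hSig : ∃ C : ℝ, ∀ A ∈ Sig, cOpNorm A ≤ C) (hPsi : ∃ C : ℝ, ∀ A ∈ Psi, cOpNorm A ≤ C) :
    jointRad (Set.image2 (· * ·) Sig Psi) ≤ jointRad (Set.image2 (· * ·) Psi Sig) := by
  obtain ⟨C1, hC1⟩ := hSig
  obtain ⟨C2, hC2⟩ := hPsi
  set D1 := max C1 0 with hD1def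
  set D2 := max C2 0 with hD2def
  have hD1 : ∀ A ∈ Sig, cOpNorm A ≤ D1 := fun A hA => (hC1 A hA).trans (le_max_left _ _)
  have hD2 : ∀ A ∈ Psi, cOpNorm A ≤ D2 := fun A hA => (hC2 A hA).trans (le_max_left _ _)
  have hD1n : 0 ≤ D1 := le_max_right _ _
  have hD2n : 0 ≤ D2 := le_max_right _ _
  have hbound' : ∀ X ∈ Set.image2 (· * ·) Psi Sig, cOpNorm X ≤ D2 * D1 := by
    rintro _ ⟨B, hB, A, hA, rfl⟩
    calc cOpNorm (B * A) ≤ cOpNorm B * cOpNorm A := cOpNorm_mul_le _ _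
      _ ≤ D2 * D1 := mul_le_mul (hD2 B hB) (hD1 A hA) (cOpNorm_nonneg _) hD2n
  have bdd : BddBelow (Set.range fun m : ℕ =>
      (sSup (cOpNorm '' prodSet (Set.image2 (· * ·) Sig Psi) (m + 1))) ^ (((m : ℝ) + 1)⁻¹)) := by
    refine ⟨0, ?_⟩
    rintro _ ⟨j, rfl⟩
    exact Real.rpow_nonneg (NS_nonneg _) _
  rw [jointRad, jointRad]
  apply le_ciInf
  intro m
  have ht0 : (0 : ℝ) ≤ NS (Set.image2 (· * ·) Psi Sig) (m + 1) := NS_nonneg _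
  rcases ht0.eq_or_lt with h0 | htpos
  · -- degenerate case: the sup is 0
    have hNm2 : NS (Set.image2 (· * ·) Sig Psi) (m + 2) = 0 := by
      refine le_antisymm ?_ (NS_nonneg _)
      calc NS (Set.image2 (· * ·) Sig Psi) (m + 2)
          ≤ D1 * NS (Set.image2 (· * ·) Psi Sig) (m + 1) * D2 := NS_key hD1 hD1n hD2 hD2n (m + 1)
        _ = 0 := by rw [← h0]; ring
    have hle : jointRad (Set.image2 (· * ·) Sig Psi) ≤ 0 := by
      have h := ciInf_le bdd (m + 1)
      rw [jointRad]
      refine h.trans ?_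
      have : sSup (cOpNorm '' prodSet (Set.image2 (· * ·) Sig Psi) (m + 1 + 1)) = 0 := hNm2
      rw [this, Real.zero_rpow (by positivity)]
    rw [jointRad] at hle
    have hrhs : sSup (cOpNorm '' prodSet (Set.image2 (· * ·) Psi Sig) (m + 1)) = 0 := h0.symm
    rw [hrhs, Real.zero_rpow (by positivity)]
    exact hle
  · set t := NS (Set.image2 (· * ·) Psi Sig) (m + 1) with htdef
    set C := max (D1 * D2) 1 with hCdef
    have hCpos : (0 : ℝ) < C := lt_of_lt_of_le one_pos (le_max_right _ _)
    have key : ∀ k : ℕ, (⨅ j : ℕ,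
        (sSup (cOpNorm '' prodSet (Set.image2 (· * ·) Sig Psi) (j + 1))) ^ (((j : ℝ) + 1)⁻¹))
        ≤ (C * t ^ (k + 1)) ^ ((((m : ℝ) + 1) * ((k : ℝ) + 1) + 1)⁻¹) := by
      intro k
      have step1 := ciInf_le bdd ((m + 1) * (k + 1))
      have step2 : NS (Set.image2 (· * ·) Sig Psi) ((m + 1) * (k + 1) + 1)
          ≤ C * t ^ (k + 1) := by
        calc NS (Set.image2 (· * ·) Sig Psi) ((m + 1) * (k + 1) + 1)
            ≤ D1 * NS (Set.image2 (· * ·) Psi Sig) ((m + 1) * (k + 1)) * D2 :=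
              NS_key hD1 hD1n hD2 hD2n _
          _ ≤ D1 * t ^ (k + 1) * D2 := by
              apply mul_le_mul_of_nonneg_right _ hD2n
              exact mul_le_mul_of_nonneg_left
                (NS_pow_le hbound' (mul_nonneg hD2n hD1n) (m + 1) k) hD1n
          _ = (D1 * D2) * t ^ (k + 1) := by ring
          _ ≤ C * t ^ (k + 1) :=
              mul_le_mul_of_nonneg_right (le_max_left _ _) (by positivity)
      refine step1.trans ?_
      have hcast : ((((m + 1) * (k + 1) : ℕ) : ℝ) + 1)⁻¹
          = (((m : ℝ) + 1) * ((k : ℝ) + 1) + 1)⁻¹ := by push_cast; ring_nf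
      rw [hcast]
      exact Real.rpow_le_rpow (NS_nonneg _) step2 (by positivity)
    have lim := aux_tendsto C t ((m : ℝ) + 1) hCpos htpos (by positivity)
    exact ge_of_tendsto lim (Eventually.of_forall key)

end Aux

/-- For bounded sets `Σ, Psi` of `n × n` complex matrices,
`r̂(ΣPsi) = r̂(PsiΣ)`, where `ΣPsi = {AB : A ∈ Σ, B ∈ Psi}`. -/
theorem jointRad_mul_comm {n : ℕ} (Sig Psi : Set (Matrix (Fin n) (Fin n) ℂ))
    (hSig : ∃ C : ℝ, ∀ A ∈ Sig, cOpNorm A ≤ C) (hPsi : ∃ C : ℝ, ∀ A ∈ Psi, cOpNorm A ≤ C) :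
    jointRad (Set.image2 (· * ·) Sig Psi) = jointRad (Set.image2 (· * ·) Psi Sig) :=
  le_antisymm (jointRad_le_aux Sig Psi hSig hPsi) (jointRad_le_aux Psi Sig hPsi hSig)
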